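/- Natural (truncated) subtraction can be expressed via addition and bitwise Boolean operations: for naturals a, b, letting set(a) = a OR (bitwise negation of a up to its most significant 1 bit), if set(b) OR set(a) = set(a) and not (set(a) = set(b) and (a + ¬b) AND (set(a)+1) = 0), then a - b (truncated subtraction) equals (a + ¬(b + set(a))) AND set(a), where ¬x denotes bitwise negation of x up to and including its most significant 1 bit. -/

import Mathlib

/-- Bitwise negation of `a` up to and including its most significant `1` bit. -/
def negUp (a : ℕ) : ℕ := (2 ^ Nat.size a - 1) ^^^ a

/-- `set a = a OR ¬a`, the all-ones mask of the bit-length of `a`. -/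
def setBits (a : ℕ) : ℕ := a ||| negUp a

private lemma le_or_left (x y : ℕ) : x ≤ x ||| y := by
  have h : x &&& (x ||| y) = x := by
    apply Nat.eq_of_testBit_eq
    intro i
    simp only [Nat.testBit_and, Nat.testBit_or]
    cases x.testBit i <;> simp
  calc x = x &&& (x ||| y) := h.symm
    _ ≤ x ||| y := Nat.and_le_right

private lemma setBits_eq (a : ℕ) : setBits a = 2 ^ Nat.size a - 1 := by
  apply Nat.eq_of_testBit_eq
  intro i
  simp only [setBits, negUp, Nat.testBit_or, Nat.testBit_xor, Nat.testBit_two_pow_sub_one]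
  by_cases hi : i < Nat.size a
  · cases h : a.testBit i <;> simp [hi, h]
  · have ha : a.testBit i = false :=
      Nat.testBit_lt_two_pow (lt_of_lt_of_le (Nat.lt_size_self a)
        (Nat.pow_le_pow_right (by norm_num) (le_of_not_gt hi)))
    simp [hi, ha]

private lemma xor_mask {n a : ℕ} (h : a < 2 ^ n) : (2 ^ n - 1) ^^^ a = 2 ^ n - 1 - a := by
  have h1 := BitVec.toNat_not (x := BitVec.ofNat n a)
  rw [BitVec.not_def] at h1
  simp only [BitVec.toNat_xor, BitVec.toNat_allOnes, BitVec.toNat_ofNat,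
    Nat.mod_eq_of_lt h] at h1
  exact h1

private lemma size_mask (n : ℕ) : Nat.size (2 ^ n - 1) = n := by
  rcases Nat.eq_zero_or_pos n with h | h
  · simp [h]
  apply le_antisymm
  · exact Nat.size_le.2 (by have := Nat.one_le_two_pow (n := n); omega)
  · have : n - 1 < Nat.size (2 ^ n - 1) := by
      rw [Nat.lt_size]
      have h2 : 2 ^ (n - 1) * 2 = 2 ^ n := by
        rw [← pow_succ]; congr 1; omega
      have := Nat.one_le_two_pow (n := n - 1)
      omega
    omega

theorem truncated_sub_via_bool (a b : ℕ)
    (h1 : setBits b ||| setBits a = setBits a)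
    (h2 : ¬(setBits a = setBits b ∧ (a + negUp b) &&& (setBits a + 1) = 0)) :
    a - b = (a + negUp (b + setBits a)) &&& setBits a := by
  have ha : a < 2 ^ Nat.size a := Nat.lt_size_self a
  have hpow : 1 ≤ 2 ^ Nat.size a := Nat.one_le_two_pow
  have hsb : setBits b ≤ setBits a := h1 ▸ le_or_left (setBits b) (setBits a)
  rw [setBits_eq, setBits_eq] at hsb
  have hb_lt : b < 2 ^ Nat.size a := by
    have hb1 : b < 2 ^ Nat.size b := Nat.lt_size_self b
    omega
  rcases Nat.eq_zero_or_pos b with hb0 | hbpos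
  · subst hb0
    rw [zero_add, setBits_eq, show negUp (2 ^ Nat.size a - 1) = 0 by
      rw [negUp, size_mask, Nat.xor_self], add_zero,
      Nat.and_two_pow_sub_one_eq_mod, Nat.mod_eq_of_lt ha, Nat.sub_zero]
  · -- b ≥ 1
    have hsize : Nat.size (b + setBits a) = Nat.size a + 1 := by
      rw [setBits_eq]
      apply le_antisymm
      · rw [Nat.size_le, pow_succ]; omega
      · have : Nat.size a < Nat.size (b + (2 ^ Nat.size a - 1)) := by
          rw [Nat.lt_size]; omega
        omega
    have hneg : negUp (b + setBits a) = 2 ^ Nat.size a - b := by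
      rw [negUp, hsize, setBits_eq, xor_mask (by rw [pow_succ]; omega), pow_succ]
      omega
    have hba : b ≤ a := by
      by_contra hab
      push_neg at hab
      apply h2
      have hsz : Nat.size b = Nat.size a := by
        apply le_antisymm
        · rw [Nat.size_le]; omega
        · exact Nat.size_le_size (le_of_lt hab)
      constructor
      · rw [setBits_eq, setBits_eq, hsz]
      · have hnb : negUp b = 2 ^ Nat.size a - 1 - b := by
          rw [negUp, hsz, xor_mask hb_lt]
        have hlt : a + negUp b < 2 ^ Nat.size a := by omega
        rw [setBits_eq, show 2 ^ Nat.size a - 1 + 1 = 2 ^ Nat.size a by omega,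
          Nat.and_two_pow, Nat.testBit_lt_two_pow hlt]
        simp
    rw [hneg, setBits_eq, Nat.and_two_pow_sub_one_eq_mod,
      show a + (2 ^ Nat.size a - b) = (a - b) + 2 ^ Nat.size a by omega,
      Nat.add_mod_right, Nat.mod_eq_of_lt (by omega)]
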